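/- Let V be a K-vector space and n ≥ 1. The family of all K-subspaces of V of dimension at most n, viewed as a set system on V, cannot shatter any set of n + 1 vectors. That is, for any vectors v_0, ..., v_n ∈ V there is a subset A ⊆ {v_0, ..., v_n} such that no subspace W of dimension ≤ n satisfies W ∩ {v_0,...,v_n} = A. -/

import Mathlib

/-- The family of `K`-subspaces of dimension at most `n` cannot shatter a set of `n + 1`
vectors: for any distinct vectors `v₀, …, vₙ` there is a subset `A ⊆ {v₀, …, vₙ}` such that
no subspace `W` of dimension `≤ n` satisfies `W ∩ {v₀, …, vₙ} = A`. -/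
theorem subspaces_cannot_shatter {K V : Type*} [Field K] [AddCommGroup V] [Module K V]
    (n : ℕ) (hn : 1 ≤ n) (v : Fin (n + 1) → V) (hv : Function.Injective v) :
    ∃ A ⊆ Set.range v, ∀ W : Submodule K V,
      Module.rank K W ≤ (n : Cardinal) → (W : Set V) ∩ Set.range v ≠ A := by
  by_cases hli : LinearIndependent K v
  · refine ⟨Set.range v, le_refl _, fun W hW h => ?_⟩
    have hsub : Set.range v ⊆ (W : Set V) := by
      intro x hx
      have hx' : x ∈ (W : Set V) ∩ Set.range v := by rw [h]; exact hx
      exact hx'.1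
    set v' : Fin (n + 1) → W := fun j => ⟨v j, hsub ⟨j, rfl⟩⟩ with hv'
    have hli' : LinearIndependent K v' :=
      LinearIndependent.of_comp W.subtype (by exact hli)
    have h2 := hli'.cardinal_lift_le_rank.trans (Cardinal.lift_le.mpr hW)
    simp only [Cardinal.mk_fin, Cardinal.lift_natCast, Nat.cast_le] at h2
    omega
  · rw [Fintype.not_linearIndependent_iff] at hli
    obtain ⟨g, hg, i, hgi⟩ := hli
    have hmem : v i ∈ Submodule.span K (v '' {j | j ≠ i}) := by
      have hsum : g i • v i + ∑ j ∈ Finset.univ.erase i, g j • v j = 0 := by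
        rw [← Finset.add_sum_erase _ _ (Finset.mem_univ i)] at hg
        exact hg
      have heq : g i • v i = -∑ j ∈ Finset.univ.erase i, g j • v j := by
        linear_combination (norm := abel) hsum
      have hvi : v i = (g i)⁻¹ • (-∑ j ∈ Finset.univ.erase i, g j • v j) := by
        rw [← heq, ← smul_assoc, smul_eq_mul, inv_mul_cancel₀ hgi, one_smul]
      rw [hvi]
      refine Submodule.smul_mem _ _ (Submodule.neg_mem _
        (Submodule.sum_mem _ fun j hj => ?_))
      exact Submodule.smul_mem _ _ (Submodule.subset_span ⟨j, Finset.ne_of_mem_erase hj, rfl⟩)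
    refine ⟨v '' {j | j ≠ i}, ?_, fun W _ h => ?_⟩
    · rintro x ⟨j, _, rfl⟩; exact ⟨j, rfl⟩
    · have hsub : v '' {j | j ≠ i} ⊆ (W : Set V) := by
        intro x hx
        have hx' : x ∈ (W : Set V) ∩ Set.range v := by rw [h]; exact hx
        exact hx'.1
      have hWi : v i ∈ W := Submodule.span_le.mpr hsub hmem
      have : v i ∈ v '' {j | j ≠ i} := by
        rw [← h]; exact ⟨hWi, i, rfl⟩
      obtain ⟨j, hj, hji⟩ := this
      exact hj (hv hji)
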